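/- arXiv:1406.5925 — 3 statements merged into one kernel-verified Lean document; each statement's English description precedes it below -/
import Mathlib

section
/- Let R be a ring (associative with identity, not necessarily commutative). Then R is uniquely D-nil-clean if and only if R is a D-ring, or the following three conditions hold: (1) R is abelian; (2) R is periodic; and (3) R/J(R) is a Boolean ring. -/
universe u v

/-- An element `e` is a very idempotent if `e` or `-e` is an idempotent. -/
def IsVeryIdempotent {R : Type u} [Ring R] (e : R) : Prop :=
  IsIdempotentElem e ∨ IsIdempotentElem (-e)

/-- `a` is uniquely weakly nil-clean: it is a sum of a nilpotent and a very idempotent,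
and for any two such representations `a = w₁ + e₁ = w₂ + e₂` one has `e₁ ^ 2 = e₂ ^ 2`. -/
def IsUniquelyWeaklyNilClean {R : Type u} [Ring R] (a : R) : Prop :=
  (∃ w e : R, IsNilpotent w ∧ IsVeryIdempotent e ∧ a = w + e) ∧
  ∀ w₁ e₁ w₂ e₂ : R, IsNilpotent w₁ → IsVeryIdempotent e₁ → IsNilpotent w₂ →
    IsVeryIdempotent e₂ → a = w₁ + e₁ → a = w₂ + e₂ → e₁ ^ 2 = e₂ ^ 2

/-- A ring is uniquely weakly nil-clean if every element is. -/
def UniquelyWeaklyNilCleanRing (R : Type u) [Ring R] : Prop :=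
  ∀ a : R, IsUniquelyWeaklyNilClean a

/-- `a` is uniquely nil-clean: it is a sum of a nilpotent and an idempotent,
and for any two such representations `a = w₁ + e₁ = w₂ + e₂` one has `e₁ = e₂`. -/
def IsUniquelyNilClean {R : Type u} [Ring R] (a : R) : Prop :=
  (∃ w e : R, IsNilpotent w ∧ IsIdempotentElem e ∧ a = w + e) ∧
  ∀ w₁ e₁ w₂ e₂ : R, IsNilpotent w₁ → IsIdempotentElem e₁ → IsNilpotent w₂ →
    IsIdempotentElem e₂ → a = w₁ + e₁ → a = w₂ + e₂ → e₁ = e₂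

/-- A ring is uniquely nil-clean if every element is. -/
def UniquelyNilCleanRing (R : Type u) [Ring R] : Prop :=
  ∀ a : R, IsUniquelyNilClean a

/-- `a` is a zero-divisor: there are nonzero `b, c` with `a * b = 0` and `c * a = 0`. -/
def IsZeroDivisorPair {R : Type u} [Ring R] (a : R) : Prop :=
  ∃ b c : R, b ≠ 0 ∧ c ≠ 0 ∧ a * b = 0 ∧ c * a = 0

/-- A ring is abelian if every idempotent is central. -/
def AbelianRing (R : Type u) [Ring R] : Prop :=
  ∀ e : R, IsIdempotentElem e → ∀ x : R, e * x = x * e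

/-- A ring is periodic if every element satisfies `a ^ m = a ^ n` for distinct positive `m, n`. -/
def PeriodicRing (R : Type u) [Ring R] : Prop :=
  ∀ a : R, ∃ m n : ℕ, 0 < m ∧ 0 < n ∧ m ≠ n ∧ a ^ m = a ^ n

/-- A Boolean ring: every element is idempotent. -/
def IsBooleanRing (R : Type u) [Ring R] : Prop :=
  ∀ a : R, IsIdempotentElem a

/-- `R / J(R)` is isomorphic to `S`, expressed via a surjective ring homomorphism
whose kernel is exactly the Jacobson radical of `R`. -/
def QuotJacobsonIsoTo (R : Type u) [Ring R] (S : Type v) [Ring S] : Prop :=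
  ∃ f : R →+* S, Function.Surjective f ∧
    ∀ a : R, f a = 0 ↔ a ∈ Ideal.jacobson (⊥ : Ideal R)

section AuxLemmas

variable {R : Type u} [Ring R]

lemma aux_idem_pow {e : R} (he : IsIdempotentElem e) : ∀ j : ℕ, e ^ (j + 1) = e := by
  intro j
  induction j with
  | zero => exact pow_one e
  | succ j ih => rw [pow_succ, ih, he.eq]

lemma aux_nil_idem_zero {e : R} (he : IsIdempotentElem e) (hn : IsNilpotent e) : e = 0 := by
  obtain ⟨k, hk⟩ := hn
  have := aux_idem_pow he k
  rw [pow_succ, hk, zero_mul] at this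
  exact this.symm

lemma aux_swap {a b : R} (h : IsNilpotent (a * b)) : IsNilpotent (b * a) := by
  obtain ⟨k, hk⟩ := h
  have key : ∀ j : ℕ, (b * a) ^ (j + 1) = b * (a * b) ^ j * a := by
    intro j
    induction j with
    | zero => simp
    | succ j ih =>
      rw [pow_succ, ih, pow_succ]
      noncomm_ring
  exact ⟨k + 1, by rw [key k, hk, mul_zero, zero_mul]⟩

lemma aux_orth_add {u v : R} (hu : IsNilpotent u) (hv : IsNilpotent v)
    (huv : u * v = 0) (hvu : v * u = 0) : IsNilpotent (u + v) := by
  obtain ⟨a, ha⟩ := hu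
  obtain ⟨b, hb⟩ := hv
  have key : ∀ m : ℕ, (u + v) ^ (m + 1) = u ^ (m + 1) + v ^ (m + 1) := by
    intro m
    induction m with
    | zero => simp
    | succ m ih =>
      have h1 : u ^ (m + 1) * v = 0 := by rw [pow_succ, mul_assoc, huv, mul_zero]
      have h2 : v ^ (m + 1) * u = 0 := by rw [pow_succ, mul_assoc, hvu, mul_zero]
      rw [pow_succ, ih, add_mul, mul_add, mul_add, h1, h2, ← pow_succ, ← pow_succ]
      abel
  refine ⟨a + b + 1, ?_⟩
  rw [key (a + b)]
  have h1 : u ^ (a + b + 1) = 0 := by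
    rw [show a + b + 1 = a + (b + 1) by omega, pow_add, ha, zero_mul]
  have h2 : v ^ (a + b + 1) = 0 := by
    rw [show a + b + 1 = b + (a + 1) by omega, pow_add, hb, zero_mul]
  rw [h1, h2, add_zero]

lemma aux_doubling {F w g : R} (hF : IsIdempotentElem F) (hc : ∀ y : R, F * y = y * F)
    (hw : IsNilpotent w) (hFg : F = w * g) : F = 0 := by
  obtain ⟨K, hK⟩ := hw
  have key : ∀ t : ℕ, ∃ h : R, F = w ^ (2 ^ t) * h := by
    intro t
    induction t with
    | zero => exact ⟨g, by norm_num; exact hFg⟩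
    | succ t ih =>
      obtain ⟨h, hh⟩ := ih
      refine ⟨h * h, ?_⟩
      calc F = F * F := hF.eq.symm
        _ = (w ^ (2 ^ t) * h) * F := by rw [← hh]
        _ = w ^ (2 ^ t) * (F * h) := by rw [mul_assoc, ← hc h]
        _ = w ^ (2 ^ t) * ((w ^ (2 ^ t) * h) * h) := by rw [hh]
        _ = w ^ (2 ^ (t + 1)) * (h * h) := by
            rw [show (2:ℕ) ^ (t + 1) = 2 ^ t + 2 ^ t by rw [pow_succ]; omega, pow_add]
            noncomm_ring
  obtain ⟨h, hh⟩ := key K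
  have h2 : w ^ (2 ^ K) = 0 := by
    rw [show 2 ^ K = K + (2 ^ K - K) by have := @Nat.lt_two_pow_self K; omega, pow_add, hK, zero_mul]
  rw [hh, h2, zero_mul]

/-- An idempotent of the form `r * (w * c)` with `w` nilpotent is zero, in an abelian ring. -/
lemma aux_kill (hab : AbelianRing R) {w : R} (hw : IsNilpotent w) (r c : R)
    (he : IsIdempotentElem (r * (w * c))) : r * (w * c) = 0 := by
  set b := w * c with hb
  have h3 : (b * r) * ((b * r) * (b * r)) = (b * r) * (b * r) := by
    calc (b * r) * ((b * r) * (b * r)) = b * (((r * b) * (r * b)) * r) := by noncomm_ring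
      _ = b * ((r * b) * r) := by rw [he.eq]
      _ = (b * r) * (b * r) := by noncomm_ring
  have hF : IsIdempotentElem ((b * r) * (b * r)) := by
    show _ * _ = _
    calc ((b * r) * (b * r)) * ((b * r) * (b * r))
        = (b * r) * ((b * r) * ((b * r) * (b * r))) := by noncomm_ring
      _ = (b * r) * (b * r) := by rw [h3]; exact h3
  have hFg : (b * r) * (b * r) = w * (c * (r * (w * (c * r)))) := by
    rw [hb]; noncomm_ring
  have hF0 : (b * r) * (b * r) = 0 := aux_doubling hF (hab _ hF) hw hFg
  calc r * b = (r * b) * ((r * b) * (r * b)) := by rw [he.eq, he.eq]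
    _ = r * (((b * r) * (b * r)) * b) := by noncomm_ring
    _ = 0 := by rw [hF0, zero_mul, mul_zero]

open Polynomial in
/-- Decomposition: if `x² - x` is nilpotent then `x = (x - e) + e` with `e` idempotent,
`x - e` nilpotent, and `e = x * c` with `c` commuting with `x`. -/
lemma aux_L1 {R : Type u} [Ring R] (x : R) (h : IsNilpotent (x ^ 2 - x)) :
    ∃ e c : R, IsIdempotentElem e ∧ IsNilpotent (x - e) ∧ e = x * c ∧ c * x = x * c := by
  obtain ⟨n₀, hn₀⟩ := h
  set n := n₀ + 1 with hndef
  have h1 : (x ^ 2 - x) ^ n = 0 := by rw [pow_succ, hn₀, zero_mul]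
  have hxn : (x - x ^ 2) ^ n = 0 := by
    rw [show x - x ^ 2 = -(x ^ 2 - x) by abel, neg_pow, h1, mul_zero]
  have hidem := isIdempotentElem_one_sub_one_sub_pow_pow x n hxn
  set P : Polynomial ℤ := 1 - (1 - X ^ n) ^ n with hP
  have hXnP : (X : Polynomial ℤ) ^ n ∣ P := by
    have := sub_dvd_pow_sub_pow (1 : Polynomial ℤ) (1 - X ^ n) n
    rwa [sub_sub_cancel, one_pow] at this
  have hX : (X : Polynomial ℤ) ∣ P := dvd_trans (dvd_pow_self _ (by omega)) hXnP
  have hX1 : (X - 1 : Polynomial ℤ) ∣ X - P := by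
    have h2 : (1 - X : Polynomial ℤ) ^ n ∣ 1 - P := by
      simp only [hP, sub_sub_cancel]
      have := pow_dvd_pow_of_dvd (sub_dvd_pow_sub_pow (1 : Polynomial ℤ) X n) n
      rwa [one_pow] at this
    have h2' : (X - 1 : Polynomial ℤ) ∣ 1 - P :=
      dvd_trans (dvd_trans ⟨-1, by ring⟩ (dvd_pow_self _ (by omega))) h2
    have := dvd_add (dvd_refl (X - 1 : Polynomial ℤ)) h2'
    rwa [show (X - 1 : Polynomial ℤ) + (1 - P) = X - P by ring] at this
  have hcop : IsCoprime (X : Polynomial ℤ) (X - 1) := ⟨1, -1, by ring⟩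
  have hXX1 : (X : Polynomial ℤ) * (X - 1) ∣ X - P :=
    hcop.mul_dvd (dvd_sub (dvd_refl _) hX) hX1
  obtain ⟨Q, hQ⟩ := hXX1
  obtain ⟨C, hC⟩ := hX
  have haP : aeval x P = 1 - (1 - x ^ n) ^ n := by simp [hP]
  refine ⟨1 - (1 - x ^ n) ^ n, aeval x C, hidem, ?_, ?_, ?_⟩
  · have hmap := congrArg (aeval x) hQ
    simp only [map_sub, map_mul, aeval_X, map_one, haP] at hmap
    rw [hmap]
    have hcomm : Commute (x * (x - 1)) (aeval x Q) := by
      have : x * (x - 1) = aeval x ((X : Polynomial ℤ) * (X - 1)) := by simp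
      rw [this]
      show _ * _ = _ * _
      rw [← map_mul, ← map_mul, mul_comm]
    refine Commute.isNilpotent_mul_right hcomm ⟨n, ?_⟩
    have : x * (x - 1) = x ^ 2 - x := by noncomm_ring
    rw [this, h1]
  · have hmap := congrArg (aeval x) hC
    simp only [map_mul, aeval_X, haP] at hmap
    exact hmap
  · have : aeval x C * aeval x (X : Polynomial ℤ) = aeval x (X : Polynomial ℤ) * aeval x C := by
      rw [← map_mul, ← map_mul, mul_comm]
    simpa using this

lemma aux_abelian (H : ∀ a : R, IsZeroDivisorPair a → IsUniquelyNilClean a) :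
    AbelianRing R := by
  intro e he x
  by_cases h0 : e = 0
  · simp [h0]
  by_cases h1 : e = 1
  · simp [h1]
  have hone : (1 : R) - e ≠ 0 := fun h => h1 ((sub_eq_zero.mp h).symm)
  have hel : e * (1 - e) = 0 := by rw [mul_sub, mul_one, he.eq, sub_self]
  have her : (1 - e) * e = 0 := by rw [sub_mul, one_mul, he.eq, sub_self]
  have hzd : IsZeroDivisorPair e := ⟨1 - e, 1 - e, hone, hone, hel, her⟩
  have huniq := (H e hzd).2
  have key : ∀ y : R, e * (y * (1 - e)) = 0 := by
    intro y
    set u := e * (y * (1 - e)) with hu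
    have hu2 : u * u = 0 := by
      calc u * u = e * y * (((1 - e) * e) * (y * (1 - e))) := by rw [hu]; noncomm_ring
        _ = 0 := by rw [her, zero_mul, mul_zero]
    have hue : u * e = 0 := by
      calc u * e = e * y * ((1 - e) * e) := by rw [hu]; noncomm_ring
        _ = 0 := by rw [her, mul_zero]
    have heu : e * u = u := by
      calc e * u = (e * e) * (y * (1 - e)) := by rw [hu]; noncomm_ring
        _ = u := by rw [he.eq, hu]
    have hf : IsIdempotentElem (e + u) := by
      show _ * _ = _
      calc (e + u) * (e + u) = e * e + e * u + (u * e + u * u) := by noncomm_ring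
        _ = e + u := by rw [he.eq, heu, hue, hu2]; abel
    have hw : IsNilpotent (-u) := ⟨2, by rw [pow_two, neg_mul_neg, hu2]⟩
    have := huniq (-u) (e + u) 0 e hw hf ⟨1, pow_one 0⟩ he (by abel) (by abel)
    exact add_eq_left.mp this
  have key2 : ∀ y : R, (1 - e) * (y * e) = 0 := by
    intro y
    set u := (1 - e) * (y * e) with hu
    have hu2 : u * u = 0 := by
      calc u * u = (1 - e) * y * ((e * (1 - e)) * (y * e)) := by rw [hu]; noncomm_ring
        _ = 0 := by rw [hel, zero_mul, mul_zero]
    have hue : u * e = u := by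
      calc u * e = (1 - e) * (y * (e * e)) := by rw [hu]; noncomm_ring
        _ = u := by rw [he.eq, hu]
    have heu : e * u = 0 := by
      calc e * u = (e * (1 - e)) * (y * e) := by rw [hu]; noncomm_ring
        _ = 0 := by rw [hel, zero_mul]
    have hf : IsIdempotentElem (e + u) := by
      show _ * _ = _
      calc (e + u) * (e + u) = e * e + e * u + (u * e + u * u) := by noncomm_ring
        _ = e + u := by rw [he.eq, heu, hue, hu2]; abel
    have hw : IsNilpotent (-u) := ⟨2, by rw [pow_two, neg_mul_neg, hu2]⟩
    have := huniq (-u) (e + u) 0 e hw hf ⟨1, pow_one 0⟩ he (by abel) (by abel)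
    exact add_eq_left.mp this
  have k1 : e * x - e * (x * e) = 0 := by
    have := key x
    calc e * x - e * (x * e) = e * (x * (1 - e)) := by noncomm_ring
      _ = 0 := this
  have k2 : x * e - e * (x * e) = 0 := by
    have := key2 x
    calc x * e - e * (x * e) = (1 - e) * (x * e) := by noncomm_ring
      _ = 0 := this
  have := sub_eq_zero.mp k1
  rw [this, ← sub_eq_zero]
  calc e * (x * e) - x * e = -(x * e - e * (x * e)) := by abel
    _ = 0 := by rw [k2, neg_zero]

lemma aux_unc_sq (hab : AbelianRing R) {b : R} (hb : IsUniquelyNilClean b) :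
    IsNilpotent (b ^ 2 - b) := by
  obtain ⟨w, f, hw, hf, hbe⟩ := hb.1
  have hfc := hab f hf
  have key : b ^ 2 - b = w * (w + 2 * f - 1) := by
    rw [hbe]
    have hfw : f * w = w * f := hfc w
    have expand : (w + f) ^ 2 - (w + f) = w * w + w * f + f * w + f * f - w - f := by
      noncomm_ring
    rw [expand, hf.eq, hfw]
    noncomm_ring
  rw [key]
  have cwf : Commute w f := (hfc w).symm
  have hcomm : Commute w (w + 2 * f - 1) :=
    ((Commute.refl w).add_right ((Commute.ofNat_right w 2).mul_right cwf)).sub_right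
      (Commute.one_right w)
  exact Commute.isNilpotent_mul_right hcomm hw

lemma aux_unique (hab : AbelianRing R) {a w₁ e₁ w₂ e₂ : R} (hw₁ : IsNilpotent w₁)
    (he₁ : IsIdempotentElem e₁) (hw₂ : IsNilpotent w₂) (he₂ : IsIdempotentElem e₂)
    (h1 : a = w₁ + e₁) (h2 : a = w₂ + e₂) : e₁ = e₂ := by
  have h3 : w₁ + e₁ = w₂ + e₂ := h1.symm.trans h2
  have hd : e₁ - e₂ = w₂ - w₁ := by
    rw [sub_eq_sub_iff_add_eq_add, add_comm]
    exact h3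
  have hcom : Commute w₂ w₁ := by
    have hw1eq : w₁ = w₂ + (e₂ - e₁) := by
      have : w₂ + (e₂ - e₁) = (w₂ + e₂) - e₁ := by abel
      rw [this, ← h3]; abel
    rw [hw1eq]
    exact (Commute.refl w₂).add_right
      (Commute.sub_right ((hab e₂ he₂ w₂).symm) ((hab e₁ he₁ w₂).symm))
  have hdn : IsNilpotent (e₁ - e₂) := hd ▸ Commute.isNilpotent_sub hcom hw₂ hw₁
  have hc12 : e₁ * e₂ = e₂ * e₁ := hab e₁ he₁ e₂
  have d2 : (e₁ - e₂) * (e₁ - e₂) = e₁ + e₂ - 2 * (e₁ * e₂) := by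
    rw [sub_mul, mul_sub, mul_sub, he₁.eq, he₂.eq, ← hc12]
    noncomm_ring
  have k1 : e₁ * e₂ * e₁ = e₁ * e₂ := by rw [mul_assoc, ← hc12, ← mul_assoc, he₁.eq]
  have k2 : e₁ * e₂ * e₂ = e₁ * e₂ := by rw [mul_assoc, he₂.eq]
  have hd3 : (e₁ - e₂) * (e₁ - e₂) * (e₁ - e₂) = e₁ - e₂ := by
    calc (e₁ - e₂) * (e₁ - e₂) * (e₁ - e₂) = (e₁ + e₂ - 2 * (e₁ * e₂)) * (e₁ - e₂) := by
          rw [d2]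
      _ = e₁ * e₁ - e₁ * e₂ + (e₂ * e₁ - e₂ * e₂) - (2 * (e₁ * e₂ * e₁) - 2 * (e₁ * e₂ * e₂)) := by
          noncomm_ring
      _ = e₁ - e₂ := by rw [he₁.eq, he₂.eq, ← hc12, k1, k2]; abel
  obtain ⟨k, hk⟩ := hdn
  have hodd : ∀ j : ℕ, (e₁ - e₂) ^ (2 * j + 1) = e₁ - e₂ := by
    intro j
    induction j with
    | zero => exact pow_one _
    | succ j ih =>
      rw [show 2 * (j + 1) + 1 = (2 * j + 1) + 2 by omega, pow_add, ih, pow_two,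
        ← mul_assoc, hd3]
  have := hodd k
  rw [show 2 * k + 1 = k + (k + 1) by omega, pow_add, hk, zero_mul] at this
  exact sub_eq_zero.mp this.symm

lemma aux_cast_eq {a b n : ℕ} (h : (n : R) = 0) (hd : a ≡ b [MOD n]) :
    ((a : ℕ) : R) = ((b : ℕ) : R) := by
  obtain ⟨d, hd2⟩ := Nat.ModEq.dvd hd
  have := congrArg (fun t : ℤ => (t : R)) hd2
  push_cast at this
  rw [h, zero_mul] at this
  exact (sub_eq_zero.mp this).symm

/-- Periodicity from `x² - x` always nilpotent. -/
lemma aux_periodic (hall : ∀ x : R, IsNilpotent (x ^ 2 - x)) (x : R) :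
    ∃ m n : ℕ, 0 < m ∧ 0 < n ∧ m ≠ n ∧ x ^ m = x ^ n := by
  obtain ⟨e, c, he, hnil, hec, hcx⟩ := aux_L1 x (hall x)
  obtain ⟨k, hk⟩ := hnil
  have h2 : IsNilpotent (2 : R) := by
    have := hall (-1)
    norm_num at this
    exact this
  obtain ⟨q, hq⟩ := h2
  have h2q : ((2 ^ q : ℕ) : R) = 0 := by push_cast; exact hq
  set n := x - e with hndef
  have hcomne : Commute n e := by
    have h1 : Commute x e := by
      show x * e = e * x
      rw [hec, mul_assoc, hcx]
    exact h1.sub_left (Commute.refl e)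
  have key : ∀ m : ℕ, k ≤ m → x ^ m = ∑ i ∈ Finset.range k, n ^ i * e * (Nat.choose m i : R) := by
    intro m hm
    have hx : x = n + e := by rw [hndef]; abel
    rw [hx, Commute.add_pow hcomne]
    rw [← Finset.sum_range_add_sum_Ico _ (le_trans hm (Nat.le_succ m))]
    have h0 : ∑ i ∈ Finset.Ico k (m + 1), n ^ i * e ^ (m - i) * (Nat.choose m i : R) = 0 := by
      refine Finset.sum_eq_zero fun i hi => ?_
      have hki : k ≤ i := (Finset.mem_Ico.mp hi).1
      have : n ^ i = 0 := by
        rw [show i = k + (i - k) by omega, pow_add, hk, zero_mul]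
      rw [this, zero_mul, zero_mul]
    rw [h0, add_zero]
    refine Finset.sum_congr rfl fun i hi => ?_
    have hik : i < k := Finset.mem_range.mp hi
    have : e ^ (m - i) = e := by
      rw [show m - i = (m - i - 1) + 1 by omega]
      exact aux_idem_pow he _
    rw [this]
  haveI : NeZero (2 ^ q) := ⟨pow_ne_zero _ two_ne_zero⟩
  obtain ⟨m₁, m₂, hne, heq⟩ := Finite.exists_ne_map_eq_of_infinite
    (fun m : ℕ => fun i : Fin k => ((Nat.choose (m + k + 1) i : ZMod (2 ^ q))))
  refine ⟨m₁ + k + 1, m₂ + k + 1, by omega, by omega, by omega, ?_⟩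
  rw [key _ (by omega), key _ (by omega)]
  refine Finset.sum_congr rfl fun i hi => ?_
  have hik : i < k := Finset.mem_range.mp hi
  have hzm : ((Nat.choose (m₁ + k + 1) i : ZMod (2 ^ q))) = (Nat.choose (m₂ + k + 1) i : ZMod (2 ^ q)) := by
    have := congrFun heq ⟨i, hik⟩
    simpa using this
  have hmod : Nat.choose (m₁ + k + 1) i ≡ Nat.choose (m₂ + k + 1) i [MOD 2 ^ q] :=
    (ZMod.natCast_eq_natCast_iff _ _ _).mp hzm
  rw [aux_cast_eq h2q hmod]

lemma aux_nil_left (hab : AbelianRing R) (hall : ∀ x : R, IsNilpotent (x ^ 2 - x))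
    {w : R} (hw : IsNilpotent w) (r : R) : IsNilpotent (r * w) := by
  obtain ⟨e, c, he, hnil, hec, hcx⟩ := aux_L1 (r * w) (hall _)
  have he' : IsIdempotentElem (r * (w * c)) := by rwa [← mul_assoc, ← hec]
  have he0 : e = 0 := by rw [hec, mul_assoc]; exact aux_kill hab hw r c he'
  rw [he0, sub_zero] at hnil
  exact hnil

lemma aux_jac_unit {u : R} (hu : u ∈ Ideal.jacobson (⊥ : Ideal R)) : IsUnit (1 - u) := by
  have key : ∀ v ∈ Ideal.jacobson (⊥ : Ideal R), ∃ z : R, z * (1 - v) = 1 := by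
    intro v hv
    obtain ⟨z, hz⟩ := Ideal.mem_jacobson_iff.mp hv (-1)
    rw [Ideal.mem_bot] at hz
    refine ⟨z, ?_⟩
    have h1 : z * (1 - v) = z * (-1) * v + z := by noncomm_ring
    rw [h1]
    exact sub_eq_zero.mp hz
  obtain ⟨z, hz⟩ := key u hu
  have hzu : z = 1 + z * u := by
    have h1 : z * (1 - u) = z - z * u := by noncomm_ring
    rw [h1] at hz
    calc z = (z - z * u) + z * u := by abel
      _ = 1 + z * u := by rw [hz]
  have hmem : -(z * u) ∈ Ideal.jacobson (⊥ : Ideal R) :=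
    neg_mem (Ideal.mul_mem_left _ z hu)
  obtain ⟨z', hz'⟩ := key _ hmem
  rw [sub_neg_eq_add, ← hzu] at hz'
  have h1u : (1 - u) = z' := by
    calc (1 - u) = 1 * (1 - u) := (one_mul _).symm
      _ = (z' * z) * (1 - u) := by rw [hz']
      _ = z' * (z * (1 - u)) := by rw [mul_assoc]
      _ = z' := by rw [hz, mul_one]
  refine ⟨⟨1 - u, z, ?_, hz⟩, rfl⟩
  rw [h1u]
  exact hz'

lemma aux_jac_nil (hall : ∀ x : R, IsNilpotent (x ^ 2 - x)) {a : R}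
    (ha : a ∈ Ideal.jacobson (⊥ : Ideal R)) : IsNilpotent a := by
  obtain ⟨e, c, he, hnil, hec, hcx⟩ := aux_L1 a (hall a)
  have hce : e = c * a := by rw [hec, ← hcx]
  have heJ : e ∈ Ideal.jacobson (⊥ : Ideal R) := hce ▸ Ideal.mul_mem_left _ c ha
  obtain ⟨z, hz⟩ := Ideal.mem_jacobson_iff.mp heJ (-1)
  rw [Ideal.mem_bot] at hz
  have hz1 : z * (1 - e) = 1 := by
    have h1 : z * (1 - e) = z * (-1) * e + z := by noncomm_ring
    rw [h1]
    exact sub_eq_zero.mp hz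
  have he0 : e = 0 := by
    have h1 : e = (z * (1 - e)) * e := by rw [hz1, one_mul]
    rwa [mul_assoc, sub_mul, one_mul, he.eq, sub_self, mul_zero] at h1
  rwa [he0, sub_zero] at hnil

lemma aux_nil_mem_jac (hab : AbelianRing R) (hall : ∀ x : R, IsNilpotent (x ^ 2 - x))
    {w : R} (hw : IsNilpotent w) : w ∈ Ideal.jacobson (⊥ : Ideal R) := by
  rw [Ideal.mem_jacobson_iff]
  intro y
  have hyw : IsNilpotent (y * w) := aux_nil_left hab hall hw y
  have hu : IsUnit (1 + y * w) := hyw.isUnit_one_add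
  obtain ⟨v, hv⟩ := hu.exists_left_inv
  refine ⟨v, ?_⟩
  rw [Ideal.mem_bot]
  have h1 : v * y * w + v - 1 = v * (1 + y * w) - 1 := by noncomm_ring
  rw [h1, hv, sub_self]

lemma aux_allnil (H : ∀ a : R, IsZeroDivisorPair a → IsUniquelyNilClean a)
    (hab : AbelianRing R) {e : R} (he : IsIdempotentElem e) (he0 : e ≠ 0) (he1 : e ≠ 1) :
    ∀ x : R, IsNilpotent (x ^ 2 - x) := by
  intro x
  have hone : (1 : R) - e ≠ 0 := fun h => he1 ((sub_eq_zero.mp h).symm)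
  have h1e : IsIdempotentElem (1 - e) := he.one_sub
  have hel : e * (1 - e) = 0 := by rw [mul_sub, mul_one, he.eq, sub_self]
  have her : (1 - e) * e = 0 := by rw [sub_mul, one_mul, he.eq, sub_self]
  have hcent := hab e he
  have hcent1 := hab (1 - e) h1e
  have zd1 : IsZeroDivisorPair (e * x) := by
    refine ⟨1 - e, 1 - e, hone, hone, ?_, ?_⟩
    · calc e * x * (1 - e) = e * (x * (1 - e)) := by rw [mul_assoc]
        _ = e * ((1 - e) * x) := by rw [hcent1 x]
        _ = (e * (1 - e)) * x := by rw [mul_assoc]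
        _ = 0 := by rw [hel, zero_mul]
    · calc (1 - e) * (e * x) = ((1 - e) * e) * x := by rw [mul_assoc]
        _ = 0 := by rw [her, zero_mul]
  have zd2 : IsZeroDivisorPair ((1 - e) * x) := by
    refine ⟨e, e, he0, he0, ?_, ?_⟩
    · calc (1 - e) * x * e = (1 - e) * (x * e) := by rw [mul_assoc]
        _ = (1 - e) * (e * x) := by rw [hcent x]
        _ = ((1 - e) * e) * x := by rw [mul_assoc]
        _ = 0 := by rw [her, zero_mul]
    · calc e * ((1 - e) * x) = (e * (1 - e)) * x := by rw [mul_assoc]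
        _ = 0 := by rw [hel, zero_mul]
  have n1 : IsNilpotent ((e * x) ^ 2 - e * x) := aux_unc_sq hab (H _ zd1)
  have n2 : IsNilpotent (((1 - e) * x) ^ 2 - (1 - e) * x) := aux_unc_sq hab (H _ zd2)
  have hu : (e * x) ^ 2 - e * x = e * (x ^ 2 - x) := by
    have h' : e * x * (e * x) = e * (x * x) := by
      calc e * x * (e * x) = e * ((x * e) * x) := by noncomm_ring
        _ = e * ((e * x) * x) := by rw [← hcent x]
        _ = (e * e) * (x * x) := by noncomm_ring
        _ = e * (x * x) := by rw [he.eq]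
    calc (e * x) ^ 2 - e * x = e * x * (e * x) - e * x := by rw [pow_two]
      _ = e * (x * x) - e * x := by rw [h']
      _ = e * (x ^ 2 - x) := by noncomm_ring
  have hv : ((1 - e) * x) ^ 2 - (1 - e) * x = (1 - e) * (x ^ 2 - x) := by
    have h' : (1 - e) * x * ((1 - e) * x) = (1 - e) * (x * x) := by
      calc (1 - e) * x * ((1 - e) * x) = (1 - e) * ((x * (1 - e)) * x) := by noncomm_ring
        _ = (1 - e) * (((1 - e) * x) * x) := by rw [← hcent1 x]
        _ = ((1 - e) * (1 - e)) * (x * x) := by noncomm_ring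
        _ = (1 - e) * (x * x) := by rw [h1e.eq]
    calc ((1 - e) * x) ^ 2 - (1 - e) * x = (1 - e) * x * ((1 - e) * x) - (1 - e) * x := by
          rw [pow_two]
      _ = (1 - e) * (x * x) - (1 - e) * x := by rw [h']
      _ = (1 - e) * (x ^ 2 - x) := by noncomm_ring
  rw [hu] at n1
  rw [hv] at n2
  set t := x ^ 2 - x with ht
  have horth1 : (e * t) * ((1 - e) * t) = 0 := by
    calc (e * t) * ((1 - e) * t) = e * ((t * (1 - e)) * t) := by noncomm_ring
      _ = e * (((1 - e) * t) * t) := by rw [← hcent1 t]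
      _ = (e * (1 - e)) * (t * t) := by noncomm_ring
      _ = 0 := by rw [hel, zero_mul]
  have horth2 : ((1 - e) * t) * (e * t) = 0 := by
    calc ((1 - e) * t) * (e * t) = (1 - e) * ((t * e) * t) := by noncomm_ring
      _ = (1 - e) * ((e * t) * t) := by rw [← hcent t]
      _ = ((1 - e) * e) * (t * t) := by noncomm_ring
      _ = 0 := by rw [her, zero_mul]
  have hsum : t = e * t + (1 - e) * t := by noncomm_ring
  rw [ht] at hsum ⊢
  rw [hsum]
  exact aux_orth_add n1 n2 horth1 horth2

end AuxLemmas

theorem stmt17 (R : Type u) [Ring R] :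
    (∀ a : R, IsZeroDivisorPair a → IsUniquelyNilClean a) ↔
      ((∀ a : R, IsZeroDivisorPair a → IsNilpotent a) ∨
        (AbelianRing R ∧ PeriodicRing R ∧
          ∃ (S : Type u) (_ : Ring S), IsBooleanRing S ∧ QuotJacobsonIsoTo R S)) := by
  constructor
  · intro H
    by_cases hD : ∀ a : R, IsZeroDivisorPair a → IsNilpotent a
    · exact Or.inl hD
    push_neg at hD
    obtain ⟨a, hzd, hna⟩ := hD
    have hab : AbelianRing R := aux_abelian H
    obtain ⟨w, e, hw, he, hdec⟩ := (H a hzd).1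
    have he0 : e ≠ 0 := by
      rintro rfl
      exact hna (by rw [hdec, add_zero]; exact hw)
    have he1 : e ≠ 1 := by
      rintro rfl
      obtain ⟨b, cc, hb, hc, hab0, hca0⟩ := hzd
      have hu : IsUnit a := hdec ▸ hw.isUnit_add_one
      obtain ⟨vv, hvv⟩ := hu.exists_left_inv
      exact hb (by calc b = 1 * b := (one_mul b).symm
        _ = (vv * a) * b := by rw [hvv]
        _ = vv * (a * b) := by rw [mul_assoc]
        _ = 0 := by rw [hab0, mul_zero])
    have hall : ∀ x : R, IsNilpotent (x ^ 2 - x) := aux_allnil H hab he he0 he1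
    have hjac : ∀ z : R, z ∈ Ideal.jacobson (⊥ : Ideal R) ↔ IsNilpotent z := fun z =>
      ⟨fun h => aux_jac_nil hall h, fun h => aux_nil_mem_jac hab hall h⟩
    refine Or.inr ⟨hab, fun x => aux_periodic hall x, ?_⟩
    have nil_right : ∀ {w : R}, IsNilpotent w → ∀ d : R, IsNilpotent (w * d) :=
      fun {w} hw d => aux_swap (aux_nil_left hab hall hw d)
    let c : RingCon R :=
      { r := fun a b => IsNilpotent (a - b)
        iseqv := ⟨fun a => by simp,
          fun {a b} h => by
            have := h.neg
            rwa [neg_sub] at this,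
          fun {a b d} h1 h2 => by
            have h3 : a - d = (a - b) + (b - d) := by abel
            rw [h3]
            exact (hjac _).mp (add_mem ((hjac _).mpr h1) ((hjac _).mpr h2))⟩
        mul' := fun {a b p q} h1 h2 => by
          show IsNilpotent (a * p - b * q)
          have h3 : a * p - b * q = a * (p - q) + (a - b) * q := by noncomm_ring
          rw [h3]
          exact (hjac _).mp (add_mem
            ((hjac _).mpr (aux_nil_left hab hall h2 a))
            ((hjac _).mpr (nil_right h1 q)))
        add' := fun {a b p q} h1 h2 => by
          show IsNilpotent ((a + p) - (b + q))
          have h3 : (a + p) - (b + q) = (a - b) + (p - q) := by abel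
          rw [h3]
          exact (hjac _).mp (add_mem ((hjac _).mpr h1) ((hjac _).mpr h2)) }
    have hcrel : ∀ x y : R, c x y ↔ IsNilpotent (x - y) := fun x y => Iff.rfl
    refine ⟨c.Quotient, inferInstance, ?_, RingCon.mk' c, ?_, ?_⟩
    · intro s
      refine Quot.inductionOn s fun x => ?_
      show ((x : c.Quotient)) * x = x
      rw [← RingCon.coe_mul]
      rw [RingCon.eq]
      show IsNilpotent (x * x - x)
      have := hall x
      rwa [pow_two] at this
    · intro s
      exact Quot.inductionOn s fun x => ⟨x, rfl⟩
    · intro z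
      have h0 : (RingCon.mk' c) z = 0 ↔ c z 0 := by
        rw [show (0 : c.Quotient) = ((0 : R) : c.Quotient) from (RingCon.coe_zero c).symm]
        exact RingCon.eq c
      rw [h0, hcrel, sub_zero, hjac]
  · rintro (hD | ⟨hab, hper, S, _, hBool, f, hsurj, hker⟩)
    · intro a hzd
      have hna : IsNilpotent a := hD a hzd
      constructor
      · exact ⟨a, 0, hna, IsIdempotentElem.zero, (add_zero a).symm⟩
      · have key : ∀ w e : R, IsNilpotent w → IsIdempotentElem e → a = w + e → e = 0 := by
          intro w e hw he hdec
          by_contra hne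
          by_cases h1 : e = 1
          · subst h1
            obtain ⟨b, cc, hb, hc, hab0, hca0⟩ := hzd
            have hu : IsUnit a := hdec ▸ hw.isUnit_add_one
            obtain ⟨vv, hvv⟩ := hu.exists_left_inv
            exact hb (by calc b = 1 * b := (one_mul b).symm
              _ = (vv * a) * b := by rw [hvv]
              _ = vv * (a * b) := by rw [mul_assoc]
              _ = 0 := by rw [hab0, mul_zero])
          · have hone : (1 : R) - e ≠ 0 := fun h => h1 ((sub_eq_zero.mp h).symm)
            have hel : e * (1 - e) = 0 := by rw [mul_sub, mul_one, he.eq, sub_self]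
            have her : (1 - e) * e = 0 := by rw [sub_mul, one_mul, he.eq, sub_self]
            exact hne (aux_nil_idem_zero he (hD e ⟨1 - e, 1 - e, hone, hone, hel, her⟩))
        intro w₁ e₁ w₂ e₂ hw₁ he₁ hw₂ he₂ h1 h2
        rw [key w₁ e₁ hw₁ he₁ h1, key w₂ e₂ hw₂ he₂ h2]
    · intro a _
      constructor
      · have hBa : IsIdempotentElem (f a) := hBool (f a)
        have hmem : a ^ 2 - a ∈ Ideal.jacobson (⊥ : Ideal R) := by
          rw [← hker]
          rw [map_sub, map_pow, pow_two, hBa.eq, sub_self]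
        have hnil : IsNilpotent (a ^ 2 - a) := by
          set t := a ^ 2 - a with ht
          obtain ⟨m, n, hm, hn, hmn, hp⟩ := hper t
          rcases Nat.lt_or_ge m n with hlt | hge
          · -- m < n
            have h1 : t ^ m * (1 - t ^ (n - m)) = 0 := by
              rw [mul_sub, mul_one, ← pow_add, show m + (n - m) = n by omega,
                sub_eq_zero]
              exact hp
            have hmemp : t ^ (n - m) ∈ Ideal.jacobson (⊥ : Ideal R) := by
              rw [show n - m = (n - m - 1) + 1 by omega, pow_succ]
              exact Ideal.mul_mem_left _ _ hmem
            obtain ⟨vv, hvv⟩ := (aux_jac_unit hmemp).exists_right_inv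
            refine ⟨m, ?_⟩
            calc t ^ m = t ^ m * ((1 - t ^ (n - m)) * vv) := by rw [hvv, mul_one]
              _ = (t ^ m * (1 - t ^ (n - m))) * vv := by rw [mul_assoc]
              _ = 0 := by rw [h1, zero_mul]
          · have hlt : n < m := by omega
            have h1 : t ^ n * (1 - t ^ (m - n)) = 0 := by
              rw [mul_sub, mul_one, ← pow_add, show n + (m - n) = m by omega,
                sub_eq_zero]
              exact hp.symm
            have hmemp : t ^ (m - n) ∈ Ideal.jacobson (⊥ : Ideal R) := by
              rw [show m - n = (m - n - 1) + 1 by omega, pow_succ]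
              exact Ideal.mul_mem_left _ _ hmem
            obtain ⟨vv, hvv⟩ := (aux_jac_unit hmemp).exists_right_inv
            refine ⟨n, ?_⟩
            calc t ^ n = t ^ n * ((1 - t ^ (m - n)) * vv) := by rw [hvv, mul_one]
              _ = (t ^ n * (1 - t ^ (m - n))) * vv := by rw [mul_assoc]
              _ = 0 := by rw [h1, zero_mul]
        obtain ⟨e, cc, he, hnl, hec, hcx⟩ := aux_L1 a hnil
        exact ⟨a - e, e, hnl, he, by abel⟩
      · intro w₁ e₁ w₂ e₂ hw₁ he₁ hw₂ he₂ h1 h2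
        exact aux_unique hab hw₁ he₁ hw₂ he₂ h1 h2
end

section
/- Let R be a ring (associative with identity, not necessarily commutative). Then R is uniquely nil-clean if and only if: (1) R is abelian; and (2) R/J(R) is a Boolean ring and J(R) is a nil ideal. -/
universe u v

section Aux

variable {R : Type u} [Ring R]

lemma aux_abelian_s18 (h : UniquelyNilCleanRing R) : AbelianRing R := by
  intro e he x
  have h1 : (1 - e) * e = 0 := by rw [sub_mul, one_mul, he.eq, sub_self]
  have h2 : e * (1 - e) = 0 := by rw [mul_sub, mul_one, he.eq, sub_self]
  have h1' : ∀ z : R, (1 - e) * (e * z) = 0 := fun z => by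
    rw [← mul_assoc, h1, zero_mul]
  have h2' : ∀ z : R, e * ((1 - e) * z) = 0 := fun z => by
    rw [← mul_assoc, h2, zero_mul]
  -- first relation : e * x = e * x * e
  have hx1 : e * x = e * x * e := by
    set u := e * x * (1 - e) with hu
    have hu2 : u * u = 0 := by
      simp only [hu, mul_assoc, h1', mul_zero]
    have heu : e * u = u := by
      simp only [hu, ← mul_assoc]; rw [he.eq]
    have hue : u * e = 0 := by
      simp only [hu, mul_assoc, h1, mul_zero]
    have hf : IsIdempotentElem (e + u) := by
      show (e + u) * (e + u) = e + u
      rw [add_mul, mul_add, mul_add, he.eq, heu, hue, hu2, add_zero, add_zero]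
    have hequ : e = e + u :=
      (h e).2 0 e (-u) (e + u) ⟨1, by simp⟩ he
        ⟨2, by rw [pow_two, neg_mul_neg, hu2]⟩ hf (by rw [zero_add]) (by abel)
    have hu0 : u = 0 := (left_eq_add.mp hequ)
    have : e * x * (1 - e) = 0 := hu0
    rw [mul_sub, mul_one, sub_eq_zero] at this
    exact this
  -- second relation : x * e = e * x * e
  have hx2 : x * e = e * x * e := by
    set v := (1 - e) * x * e with hv
    have hv2 : v * v = 0 := by
      simp only [hv, mul_assoc, h2', mul_zero]
    have hev : e * v = 0 := by
      simp only [hv, mul_assoc, h2']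
    have hve : v * e = v := by
      simp only [hv, mul_assoc, he.eq]
    have hg : IsIdempotentElem (e + v) := by
      show (e + v) * (e + v) = e + v
      rw [add_mul, mul_add, mul_add, he.eq, hev, hve, hv2, add_zero, add_zero]
    have heqv : e = e + v :=
      (h e).2 0 e (-v) (e + v) ⟨1, by simp⟩ he
        ⟨2, by rw [pow_two, neg_mul_neg, hv2]⟩ hg (by rw [zero_add]) (by abel)
    have hv0 : v = 0 := (left_eq_add.mp heqv)
    have : (1 - e) * x * e = 0 := hv0
    rw [sub_mul, one_mul, sub_mul, sub_eq_zero] at this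
    exact this
  rw [hx1, hx2]

lemma aux_mul_nilpotent (h : UniquelyNilCleanRing R) (hab : AbelianRing R)
    {w : R} (hw : IsNilpotent w) (y : R) : IsNilpotent (w * y) := by
  obtain ⟨n0, e, hn0, he, hd⟩ := (h (w * y)).1
  have hc := hab e he
  have hcew : Commute e w := hc w
  have hcen : Commute e n0 := hc n0
  have hb : IsNilpotent (e * w) := hcew.isNilpotent_mul_left hw
  have hm : IsNilpotent (e * n0) := hcen.isNilpotent_mul_left hn0
  obtain ⟨V, hV⟩ := hm.isUnit_one_add
  have hv1 : (1 + e * n0) * (↑V⁻¹ : R) = 1 := by rw [← hV]; exact V.mul_inv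
  have hem : e * (e * n0) = e * n0 := by rw [← mul_assoc, he.eq]
  have hkey : (e * w) * ((e * y) * (↑V⁻¹ : R)) = e := by
    have h1 : (e * w) * (e * y) = e + e * n0 := by
      calc (e * w) * (e * y) = e * ((w * e) * y) := by simp only [mul_assoc]
      _ = e * ((e * w) * y) := by rw [← hc w]
      _ = (e * e) * (w * y) := by simp only [mul_assoc]
      _ = e * (n0 + e) := by rw [he.eq, hd]
      _ = e + e * n0 := by rw [mul_add, he.eq, add_comm]
    calc (e * w) * ((e * y) * (↑V⁻¹ : R))
        = ((e * w) * (e * y)) * (↑V⁻¹ : R) := (mul_assoc _ _ _).symm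
      _ = (e + e * n0) * (↑V⁻¹ : R) := by rw [h1]
      _ = (e * (1 + e * n0)) * (↑V⁻¹ : R) := by rw [mul_add, mul_one, hem]
      _ = e * ((1 + e * n0) * (↑V⁻¹ : R)) := by rw [mul_assoc]
      _ = e := by rw [hv1, mul_one]
  set b := e * w with hbdef
  set c := (e * y) * (↑V⁻¹ : R) with hcdef
  have hbe : b * e = b := by
    calc (e * w) * e = e * (w * e) := by rw [mul_assoc]
    _ = e * (e * w) := by rw [← hc w]
    _ = (e * e) * w := by rw [mul_assoc]
    _ = e * w := by rw [he.eq]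
  have hpow : ∀ j, b ^ (j + 1) * c ^ (j + 1) = e := by
    intro j
    induction j with
    | zero => simpa using hkey
    | succ j ih =>
      have hbje : b ^ (j + 1) * e = b ^ (j + 1) := by
        rw [pow_succ, mul_assoc, hbe]
      calc b ^ (j + 1 + 1) * c ^ (j + 1 + 1)
          = (b ^ (j + 1) * b) * (c * c ^ (j + 1)) := by rw [pow_succ b (j+1), pow_succ' c (j+1)]
        _ = b ^ (j + 1) * ((b * c) * c ^ (j + 1)) := by
            rw [mul_assoc, ← mul_assoc b c]
        _ = b ^ (j + 1) * (e * c ^ (j + 1)) := by rw [hkey]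
        _ = (b ^ (j + 1) * e) * c ^ (j + 1) := by rw [mul_assoc]
        _ = b ^ (j + 1) * c ^ (j + 1) := by rw [hbje]
        _ = e := ih
  obtain ⟨k, hk⟩ := hb
  have he0 : e = 0 := by
    have h0 : b ^ (k + 1) = 0 := by rw [pow_succ, hk, zero_mul]
    have := hpow k
    rw [h0, zero_mul] at this
    exact this.symm
  rw [he0, add_zero] at hd
  exact hd ▸ hn0

lemma aux_unit {b : R} (hb : b ∈ Ideal.jacobson (⊥ : Ideal R)) : IsUnit (1 - b) := by
  have key : ∀ x ∈ Ideal.jacobson (⊥ : Ideal R), ∃ z : R, z * (1 - x) = 1 := by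
    intro x hx
    obtain ⟨z, hz⟩ := Ideal.mem_jacobson_iff.1 hx (-1)
    rw [Ideal.mem_bot] at hz
    rw [mul_neg_one, neg_mul] at hz
    refine ⟨z, ?_⟩
    have h3 : z * (1 - x) - 1 = -(z * x) + z - 1 := by rw [mul_sub, mul_one]; abel
    rw [hz] at h3
    exact sub_eq_zero.mp h3
  obtain ⟨z, hz⟩ := key b hb
  have hzj : -(z * b) ∈ Ideal.jacobson (⊥ : Ideal R) :=
    neg_mem (Ideal.mul_mem_left _ z hb)
  obtain ⟨z₂, hz₂⟩ := key _ hzj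
  have h' : z - z * b = 1 := by rw [← hz, mul_sub, mul_one]
  have hzz : z₂ * z = 1 := by
    have h1 : 1 - -(z * b) = z := by rw [sub_neg_eq_add, ← h']; abel
    rw [h1] at hz₂
    exact hz₂
  have hleft : (1 - b) * z = 1 := by
    have h2 : z₂ = 1 - b := by
      calc z₂ = z₂ * (z * (1 - b)) := by rw [hz, mul_one]
      _ = (z₂ * z) * (1 - b) := by rw [mul_assoc]
      _ = 1 - b := by rw [hzz, one_mul]
    rw [← h2]; exact hzz
  exact ⟨⟨1 - b, z, hleft, hz⟩, rfl⟩

lemma aux_jnil (h : UniquelyNilCleanRing R) (hab : AbelianRing R) :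
    ∀ a ∈ Ideal.jacobson (⊥ : Ideal R), IsNilpotent a := by
  intro a ha
  obtain ⟨n0, e, hn0, he, hd⟩ := (h a).1
  have hc := hab e he
  have hu : IsUnit (1 - a) := aux_unit ha
  have hetn : e * (1 - a) = -(e * n0) := by
    rw [mul_sub, mul_one, hd, mul_add, he.eq]; abel
  have hnil : IsNilpotent (e * (1 - a)) :=
    hetn ▸ ((show Commute e n0 from hc n0).isNilpotent_mul_left hn0).neg
  obtain ⟨k, hk⟩ := hnil
  have hclaim : ∀ j, (e * (1 - a)) ^ (j + 1) = e * (1 - a) ^ (j + 1) := by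
    intro j
    induction j with
    | zero => simp
    | succ j ih =>
      calc (e * (1 - a)) ^ (j + 1 + 1)
          = (e * (1 - a)) ^ (j + 1) * (e * (1 - a)) := pow_succ _ _
        _ = (e * (1 - a) ^ (j + 1)) * (e * (1 - a)) := by rw [ih]
        _ = e * (((1 - a) ^ (j + 1) * e) * (1 - a)) := by simp only [mul_assoc]
        _ = e * ((e * (1 - a) ^ (j + 1)) * (1 - a)) := by rw [← hc ((1 - a) ^ (j + 1))]
        _ = (e * e) * ((1 - a) ^ (j + 1) * (1 - a)) := by simp only [mul_assoc]
        _ = e * (1 - a) ^ (j + 1 + 1) := by rw [he.eq, ← pow_succ]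
  have he0 : e = 0 := by
    have h1 : e * (1 - a) ^ (k + 1) = 0 := by
      rw [← hclaim k, pow_succ, hk, zero_mul]
    obtain ⟨U, hU⟩ := hu.pow (n := k + 1)
    calc e = e * ((↑U : R) * (↑U⁻¹ : R)) := by rw [U.mul_inv, mul_one]
    _ = (e * (↑U : R)) * (↑U⁻¹ : R) := by rw [mul_assoc]
    _ = 0 := by rw [hU, h1, zero_mul]
  rw [he0, add_zero] at hd
  exact hd ▸ hn0

lemma aux_asq (h : UniquelyNilCleanRing R) (hab : AbelianRing R) (a : R) :
    IsNilpotent (a - a * a) := by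
  obtain ⟨n0, e, hn0, he, hd⟩ := (h a).1
  have hen : e * n0 = n0 * e := hab e he n0
  have key : a - a * a = n0 * (1 - n0 - (e + e)) := by
    rw [hd]
    simp only [mul_add, add_mul, mul_sub, mul_one]
    rw [he.eq, hen]
    abel
  have hne : Commute n0 e := hen.symm
  have hcomm : Commute n0 (1 - n0 - (e + e)) :=
    ((Commute.one_right n0).sub_right (Commute.refl n0)).sub_right (hne.add_right hne)
  exact key ▸ hcomm.isNilpotent_mul_right hn0

lemma aux_memJ (h : UniquelyNilCleanRing R) (hab : AbelianRing R)
    {t : R} (ht : IsNilpotent t) : t ∈ Ideal.jacobson (⊥ : Ideal R) := by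
  rw [Ideal.mem_jacobson_iff]
  intro y
  have hty : IsNilpotent (t * y) := aux_mul_nilpotent h hab ht y
  obtain ⟨S, hS⟩ := hty.isUnit_one_add
  have hs1 : (↑S⁻¹ : R) * (1 + t * y) = 1 := by rw [← hS]; exact S.inv_mul
  refine ⟨1 - y * (↑S⁻¹ : R) * t, ?_⟩
  rw [Ideal.mem_bot]
  have expand : (1 - y * (↑S⁻¹ : R) * t) * y * t + (1 - y * (↑S⁻¹ : R) * t) - 1
      = y * t - y * ((↑S⁻¹ : R) * (1 + t * y)) * t := by noncomm_ring
  rw [expand, hs1, mul_one, sub_self]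

end Aux

theorem stmt18 (R : Type u) [Ring R] :
    UniquelyNilCleanRing R ↔
      AbelianRing R ∧
        (∃ (S : Type u) (_ : Ring S), IsBooleanRing S ∧ QuotJacobsonIsoTo R S) ∧
        (∀ a ∈ Ideal.jacobson (⊥ : Ideal R), IsNilpotent a) := by
  constructor
  · intro h
    have hab := aux_abelian_s18 h
    refine ⟨hab, ?_, aux_jnil h hab⟩
    set J2 := TwoSidedIdeal.jacobson (⊥ : TwoSidedIdeal R) with hJ2
    set c := J2.ringCon with hc
    have hmem : ∀ x : R, x ∈ J2 ↔ x ∈ Ideal.jacobson (⊥ : Ideal R) := by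
      intro x
      rw [hJ2, TwoSidedIdeal.mem_jacobson_iff, Ideal.mem_jacobson_iff]
      simp only [TwoSidedIdeal.mem_bot, Ideal.mem_bot]
    have hsurj : Function.Surjective (RingCon.mk' c) := by
      intro s
      exact Quot.inductionOn s fun a => ⟨a, rfl⟩
    have hker : ∀ a : R, RingCon.mk' c a = 0 ↔ a ∈ Ideal.jacobson (⊥ : Ideal R) := by
      intro a
      rw [← hmem]
      have : (RingCon.mk' c a = 0) ↔ c a 0 := by
        exact RingCon.eq c
      rw [this, ← TwoSidedIdeal.mem_iff]
    refine ⟨c.Quotient, inferInstance, ?_, RingCon.mk' c, hsurj, hker⟩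
    intro s
    obtain ⟨a, rfl⟩ := hsurj s
    show RingCon.mk' c a * RingCon.mk' c a = RingCon.mk' c a
    rw [← map_mul]
    have hmemJ : a * a - a ∈ J2 := by
      rw [hmem]
      have := aux_memJ h hab (aux_asq h hab a)
      have h2 := neg_mem this
      rwa [neg_sub] at h2
    have : c (a * a) a := (TwoSidedIdeal.rel_iff J2 _ _).2 hmemJ
    exact (RingCon.eq c).2 this
  · rintro ⟨hab, ⟨S, _, hbool, f, hfsurj, hfker⟩, hnil⟩
    intro a
    constructor
    · -- existence
      have h1 : a * a - a ∈ Ideal.jacobson (⊥ : Ideal R) := by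
        rw [← hfker, map_sub, map_mul, (hbool (f a)).eq, sub_self]
      have h2 : IsNilpotent (a - a * a) := by
        have := (hnil _ h1).neg
        rwa [neg_sub] at this
      obtain ⟨n, hn⟩ := h2
      have hn' : (a - a ^ 2) ^ n = 0 := by rw [sq]; exact hn
      have he := isIdempotentElem_one_sub_one_sub_pow_pow a n hn'
      refine ⟨a - (1 - (1 - a ^ n) ^ n), 1 - (1 - a ^ n) ^ n, ?_, he, by abel⟩
      apply hnil
      rw [← hfker]
      cases n with
      | zero =>
        rw [pow_zero] at hn'
        haveI : Subsingleton R := subsingleton_of_zero_eq_one hn'.symm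
        rw [Subsingleton.elim (a - (1 - (1 - a ^ 0) ^ 0)) (0 : R), map_zero]
      | succ n' =>
        have hfa : IsIdempotentElem (f a) := hbool _
        have hfe : f (1 - (1 - a ^ (n' + 1)) ^ (n' + 1)) = f a := by
          simp only [map_sub, map_one, map_pow]
          rw [hfa.pow_succ_eq, hfa.one_sub.pow_succ_eq, sub_sub_cancel]
        rw [map_sub, hfe, sub_self]
    · -- uniqueness
      intro w1 e1 w2 e2 hw1 he1 hw2 he2 hd1 hd2
      have hc1 := hab e1 he1
      have hc2 := hab e2 he2
      have hcc : Commute e1 e2 := hc1 e2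
      have hsum : w1 + e1 = w2 + e2 := hd1.symm.trans hd2
      have hw : e1 - e2 = w2 - w1 := by
        rw [sub_eq_sub_iff_add_eq_add, add_comm]
        exact hsum
      have hcw : Commute w2 w1 := by
        have hh1 : w1 = a - e1 := by rw [hd1, add_sub_cancel_right]
        have hh2 : w2 = a - e2 := by rw [hd2, add_sub_cancel_right]
        rw [hh1, hh2]
        show (a - e2) * (a - e1) = (a - e1) * (a - e2)
        simp only [sub_mul, mul_sub]
        rw [hc2 a, hc1 a, hc1 e2]
        abel
      have hnilsub : IsNilpotent (e1 - e2) := hw ▸ hcw.isNilpotent_sub hw2 hw1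
      exact eq_of_isNilpotent_sub_of_isIdempotentElem_of_commute he1 he2 hnilsub hcc
end

section
/- Let R be a ring (associative with identity, not necessarily commutative). Then R is uniquely nil-clean if and only if: (1) the element 2 = 1 + 1 of R is nilpotent; and (2) R is uniquely weakly nil-clean. -/
universe u v

section Aux
variable {R : Type u} [Ring R]

/-- If the uniqueness property of nil-clean decompositions holds at an idempotent `e`,
then `e` commutes with every element. -/
lemma central_of_unique (e : R) (he : IsIdempotentElem e)
    (H : ∀ w₁ e₁ w₂ e₂ : R, IsNilpotent w₁ → IsIdempotentElem e₁ → IsNilpotent w₂ →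
      IsIdempotentElem e₂ → e = w₁ + e₁ → e = w₂ + e₂ → e₁ = e₂) :
    ∀ x : R, e * x = x * e := by
  have he' : e * e = e := he
  intro x
  -- first half : e * x = e * x * e
  have h1 : e * x = e * x * e := by
    set u := e * x * (1 - e) with hu
    have hu2 : u * u = 0 := by
      have : u * u = e * x * ((1 - e) * e) * (x * (1 - e)) := by rw [hu]; noncomm_ring
      rw [this]
      have : (1 - e) * e = 0 := by rw [sub_mul, one_mul, he', sub_self]
      rw [this, mul_zero, zero_mul]
    have heu : e * u = u := by
      have : e * u = (e * e) * x * (1 - e) := by rw [hu]; noncomm_ring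
      rw [this, he']
    have hue : u * e = 0 := by
      have : u * e = e * x * ((1 - e) * e) := by rw [hu]; noncomm_ring
      rw [this]
      have : (1 - e) * e = 0 := by rw [sub_mul, one_mul, he', sub_self]
      rw [this, mul_zero]
    have hidem : IsIdempotentElem (e + u) := by
      show (e + u) * (e + u) = e + u
      rw [add_mul, mul_add, mul_add, he', heu, hue, hu2]; abel
    have hnil : IsNilpotent (-u) := ⟨2, by rw [pow_two, neg_mul_neg, hu2]⟩
    have key : e = e + u := H 0 e (-u) (e + u) ⟨1, by simp⟩ he hnil hidem
      (by rw [zero_add]) (by abel)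
    have hu0 : u = 0 :=
      (add_left_cancel (show e + (0:R) = e + u by rw [add_zero]; exact key)).symm
    have : e * x * (1 - e) = 0 := hu0
    rw [mul_sub, mul_one, sub_eq_zero] at this
    exact this
  -- second half : x * e = e * x * e
  have h2 : x * e = e * x * e := by
    set v := (1 - e) * x * e with hv
    have hv2 : v * v = 0 := by
      have : v * v = (1 - e) * x * (e * (1 - e)) * (x * e) := by rw [hv]; noncomm_ring
      rw [this]
      have : e * (1 - e) = 0 := by rw [mul_sub, mul_one, he', sub_self]
      rw [this, mul_zero, zero_mul]
    have hev : e * v = 0 := by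
      have : e * v = (e * (1 - e)) * x * e := by rw [hv]; noncomm_ring
      rw [this]
      have : e * (1 - e) = 0 := by rw [mul_sub, mul_one, he', sub_self]
      rw [this, zero_mul, zero_mul]
    have hve : v * e = v := by
      have : v * e = (1 - e) * x * (e * e) := by rw [hv]; noncomm_ring
      rw [this, he']
    have hidem : IsIdempotentElem (e + v) := by
      show (e + v) * (e + v) = e + v
      rw [add_mul, mul_add, mul_add, he', hev, hve, hv2]; abel
    have hnil : IsNilpotent (-v) := ⟨2, by rw [pow_two, neg_mul_neg, hv2]⟩
    have key : e = e + v := H 0 e (-v) (e + v) ⟨1, by simp⟩ he hnil hidem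
      (by rw [zero_add]) (by abel)
    have hv0 : v = 0 :=
      (add_left_cancel (show e + (0:R) = e + v by rw [add_zero]; exact key)).symm
    have : (1 - e) * x * e = 0 := hv0
    rw [sub_mul, one_mul, sub_mul, sub_eq_zero] at this
    exact this
  rw [h1, h2]

end Aux

theorem stmt19 (R : Type u) [Ring R] :
    UniquelyNilCleanRing R ↔
      IsNilpotent (2 : R) ∧ UniquelyWeaklyNilCleanRing R := by
  constructor
  · intro h
    -- idempotents are central
    have hab : ∀ e : R, IsIdempotentElem e → ∀ x : R, e * x = x * e := fun e he =>
      central_of_unique e he (h e).2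
    have h2 : IsNilpotent (2 : R) := by
      obtain ⟨w, e, hw, he, heq⟩ := (h (-1)).1
      have hunit : IsUnit e := by
        have : e = -(1 + w) := by
          calc e = (w + e) - w := by abel
            _ = -1 - w := by rw [← heq]
            _ = -(1 + w) := by abel
        rw [this]
        exact (hw.isUnit_one_add).neg
      have he1 : e = 1 := hunit.mul_left_cancel (by rw [he, mul_one])
      have : w = -2 := by
        rw [he1] at heq
        calc w = (w + 1) - 1 := by abel
          _ = -1 - 1 := by rw [← heq]
          _ = -2 := by norm_num
      rw [this] at hw
      simpa using hw.neg
    refine ⟨h2, fun a => ?_⟩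
    -- transform any weak decomposition into a nil-clean one
    have trans : ∀ w e : R, IsNilpotent w → IsVeryIdempotent e → a = w + e →
        ∃ w' g : R, IsNilpotent w' ∧ IsIdempotentElem g ∧ a = w' + g ∧ g = e ^ 2 := by
      rintro w e hw (he | he) heq
      · exact ⟨w, e, hw, he, heq, by rw [pow_two, he]⟩
      · set f := -e with hf
        have hfe : e ^ 2 = f := by
          rw [pow_two, ← neg_mul_neg, ← hf]; exact he
        have hcent := hab f he
        have hnil2f : IsNilpotent (2 * f) :=
          (show Commute (2:R) f by show (2:R) * f = f * 2; rw [two_mul, mul_two]).isNilpotent_mul_right h2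
        have hcomm : Commute w (-(2 * f)) := by
          have : Commute w (2 * f) := by
            show w * (2 * f) = 2 * f * w
            rw [two_mul, mul_add, add_mul, hcent w]
          exact this.neg_right
        refine ⟨w - 2 * f, f, ?_, he, ?_, hfe.symm⟩
        · rw [sub_eq_add_neg]
          exact hcomm.isNilpotent_add hw hnil2f.neg
        · rw [heq, hf]; noncomm_ring
    refine ⟨?_, ?_⟩
    · obtain ⟨w, e, hw, he, heq⟩ := (h a).1
      exact ⟨w, e, hw, Or.inl he, heq⟩
    · intro w₁ e₁ w₂ e₂ hw₁ he₁ hw₂ he₂ hq₁ hq₂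
      obtain ⟨u₁, g₁, hu₁, hg₁, hd₁, hge₁⟩ := trans w₁ e₁ hw₁ he₁ hq₁
      obtain ⟨u₂, g₂, hu₂, hg₂, hd₂, hge₂⟩ := trans w₂ e₂ hw₂ he₂ hq₂
      have := (h a).2 u₁ g₁ u₂ g₂ hu₁ hg₁ hu₂ hg₂ hd₁ hd₂
      rw [hge₁, hge₂] at this
      exact this
  · rintro ⟨h2, hw⟩
    -- idempotents are central
    have hab : ∀ e : R, IsIdempotentElem e → ∀ x : R, e * x = x * e := by
      intro e he
      refine central_of_unique e he ?_
      intro w₁ e₁ w₂ e₂ hw₁ he₁ hw₂ he₂ hq₁ hq₂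
      have := (hw e).2 w₁ e₁ w₂ e₂ hw₁ (Or.inl he₁) hw₂ (Or.inl he₂) hq₁ hq₂
      rwa [pow_two, pow_two, he₁, he₂] at this
    intro a
    refine ⟨?_, ?_⟩
    · obtain ⟨w, e, hnw, hve, heq⟩ := (hw a).1
      rcases hve with he | he
      · exact ⟨w, e, hnw, he, heq⟩
      · set f := -e with hf
        have hcent := hab f he
        have hnil2f : IsNilpotent (2 * f) :=
          (show Commute (2:R) f by show (2:R) * f = f * 2; rw [two_mul, mul_two]).isNilpotent_mul_right h2
        have hcomm : Commute w (-(2 * f)) := by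
          have : Commute w (2 * f) := by
            show w * (2 * f) = 2 * f * w
            rw [two_mul, mul_add, add_mul, hcent w]
          exact this.neg_right
        refine ⟨w - 2 * f, f, ?_, he, ?_⟩
        · rw [sub_eq_add_neg]
          exact hcomm.isNilpotent_add hnw hnil2f.neg
        · rw [heq, hf]; noncomm_ring
    · intro w₁ e₁ w₂ e₂ hw₁ he₁ hw₂ he₂ hq₁ hq₂
      have := (hw a).2 w₁ e₁ w₂ e₂ hw₁ (Or.inl he₁) hw₂ (Or.inl he₂) hq₁ hq₂
      rwa [pow_two, pow_two, he₁, he₂] at this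
end
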